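/- Let $G$ be a group with subgroups $H \subseteq K \cap L$, $H \ne K$, $H \ne L$, and $[G:H] < \infty$. Then $\frac{[K\cap L : H]-1}{\sqrt{[K:H]-1}\sqrt{[L:H]-1}} = 1$ if and only if $K = L$. -/

import Mathlib

theorem stmt_15 {G : Type*} [Group G] (H K L : Subgroup G)
    (hHK : H ≤ K) (hHL : H ≤ L) (hK : H ≠ K) (hL : H ≠ L)
    (hfin : H.index ≠ 0) :
    ((H.relIndex (K ⊓ L) : ℝ) - 1) /
        (Real.sqrt ((H.relIndex K : ℝ) - 1) * Real.sqrt ((H.relIndex L : ℝ) - 1)) = 1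
      ↔ K = L := by
  have hHKL : H ≤ K ⊓ L := le_inf hHK hHL
  -- nonzero relindices
  have hb0 : H.relIndex K ≠ 0 := by
    intro h
    exact hfin (by rw [← Subgroup.relIndex_mul_index hHK, h, zero_mul])
  have hc0 : H.relIndex L ≠ 0 := by
    intro h
    exact hfin (by rw [← Subgroup.relIndex_mul_index hHL, h, zero_mul])
  have ha0 : H.relIndex (K ⊓ L) ≠ 0 := by
    intro h
    exact hfin (by rw [← Subgroup.relIndex_mul_index hHKL, h, zero_mul])
  have hb1 : H.relIndex K ≠ 1 := fun h => hK (le_antisymm hHK (Subgroup.relIndex_eq_one.mp h))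
  have hc1 : H.relIndex L ≠ 1 := fun h => hL (le_antisymm hHL (Subgroup.relIndex_eq_one.mp h))
  have hb2 : 2 ≤ H.relIndex K := by omega
  have hc2 : 2 ≤ H.relIndex L := by omega
  -- a divides b and c
  have hab : H.relIndex (K ⊓ L) * (K ⊓ L).relIndex K = H.relIndex K :=
    Subgroup.relIndex_mul_relIndex _ _ _ hHKL inf_le_left
  have hac : H.relIndex (K ⊓ L) * (K ⊓ L).relIndex L = H.relIndex L :=
    Subgroup.relIndex_mul_relIndex _ _ _ hHKL inf_le_right
  have haleb : H.relIndex (K ⊓ L) ≤ H.relIndex K :=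
    Nat.le_of_dvd (Nat.pos_of_ne_zero hb0) ⟨_, hab.symm⟩
  have halec : H.relIndex (K ⊓ L) ≤ H.relIndex L :=
    Nat.le_of_dvd (Nat.pos_of_ne_zero hc0) ⟨_, hac.symm⟩
  set a : ℝ := (H.relIndex (K ⊓ L) : ℝ) with ha_def
  set b : ℝ := (H.relIndex K : ℝ) with hb_def
  set c : ℝ := (H.relIndex L : ℝ) with hc_def
  have hbR : (2 : ℝ) ≤ b := by rw [hb_def]; exact_mod_cast hb2
  have hcR : (2 : ℝ) ≤ c := by rw [hc_def]; exact_mod_cast hc2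
  have hy : (1 : ℝ) ≤ b - 1 := by linarith
  have hz : (1 : ℝ) ≤ c - 1 := by linarith
  have habR : a ≤ b := by rw [ha_def, hb_def]; exact_mod_cast haleb
  have hacR : a ≤ c := by rw [ha_def, hc_def]; exact_mod_cast halec
  constructor
  · intro h
    have hsy : (0:ℝ) < Real.sqrt (b - 1) := Real.sqrt_pos.mpr (by linarith)
    have hsz : (0:ℝ) < Real.sqrt (c - 1) := Real.sqrt_pos.mpr (by linarith)
    have heq : a - 1 = Real.sqrt (b - 1) * Real.sqrt (c - 1) := by
      field_simp at h
      linarith [h]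
    have hsq : (a - 1) ^ 2 = (b - 1) * (c - 1) := by
      rw [heq, mul_pow, Real.sq_sqrt (by linarith), Real.sq_sqrt (by linarith)]
    have hx1 : (1:ℝ) ≤ a - 1 := by
      rw [heq]
      calc (1:ℝ) = Real.sqrt 1 * Real.sqrt 1 := by simp
        _ ≤ Real.sqrt (b-1) * Real.sqrt (c-1) :=
          mul_le_mul (Real.sqrt_le_sqrt hy) (Real.sqrt_le_sqrt hz) (by positivity) hsy.le
    have hxy : a - 1 ≤ b - 1 := by linarith
    have hxz : a - 1 ≤ c - 1 := by linarith
    have hax : a = b := by nlinarith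
    have hay : a = c := by nlinarith
    have hKL : K ≤ L := by
      have hn : H.relIndex (K ⊓ L) = H.relIndex K := by
        rw [ha_def, hb_def] at hax; exact_mod_cast hax
      have h1 : (K ⊓ L).relIndex K = 1 :=
        Nat.eq_of_mul_eq_mul_left (Nat.pos_of_ne_zero ha0) (by rw [hab, ← hn, mul_one])
      exact le_trans (Subgroup.relIndex_eq_one.mp h1) inf_le_right
    have hLK : L ≤ K := by
      have hn : H.relIndex (K ⊓ L) = H.relIndex L := by
        rw [ha_def, hc_def] at hay; exact_mod_cast hay
      have h1 : (K ⊓ L).relIndex L = 1 :=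
        Nat.eq_of_mul_eq_mul_left (Nat.pos_of_ne_zero ha0) (by rw [hac, ← hn, mul_one])
      exact le_trans (Subgroup.relIndex_eq_one.mp h1) inf_le_left
    exact le_antisymm hKL hLK
  · rintro rfl
    have : a = b := by rw [ha_def, hb_def, inf_idem]
    rw [this]
    have hbc : b = c := by rw [hb_def, hc_def]
    rw [← hbc, ← Real.sqrt_mul_self (by linarith : (0:ℝ) ≤ b - 1)]
    field_simp
    rw [Real.sq_sqrt (Real.sqrt_nonneg _)]
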